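/- Let d > 1 and let a ≥ b > 0 be integers, written as a = C(s - 1 + d, d) + A with s > 0 and 0 ≤ A < C(s - 1 + d, d - 1), and b = C(t - 1 + d, d) + B with t ≥ 0 and 0 < B ≤ C(t - 1 + d, d - 1). If A + B < C(s - 1 + d, d - 1) and (A + B)^{⟨d-1⟩} ≥ A^{⟨d-1⟩} + B^{⟨d-1⟩}, then setting a_1 = C(s - 1 + d, d) + A + B and b_1 = C(t - 1 + d, d), one has 0 ≤ b_1 < b ≤ a < a_1 ≤ C(s + d, d), a + b = a_1 + b_1, and a^{⟨d⟩} + b^{⟨d⟩} ≤ a_1^{⟨d⟩} + b_1^{⟨d⟩}. -/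
import Mathlib


/-- Macaulay's function `a^{⟨d⟩}`: writing `a` in its Macaulay `d`-binomial representation
`a = C(k_d, d) + C(k_{d-1}, d-1) + ⋯ + C(k_j, j)` (computed greedily: `k_d` is the largest
integer with `C(k_d, d) ≤ a`), we set `a^{⟨d⟩} = C(k_d+1, d+1) + ⋯ + C(k_j+1, j+1)`,
and `0^{⟨d⟩} = 0`. -/
def macaulay : ℕ → ℕ → ℕ
  | _, 0 => 0
  | 0, _ => 0
  | d + 1, a + 1 =>
    let k := Nat.findGreatest (fun k => Nat.choose k (d + 1) ≤ a + 1) (a + d + 2)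
    Nat.choose (k + 1) (d + 2) + macaulay d (a + 1 - Nat.choose k (d + 1))

lemma macaulay_zero (d : ℕ) : macaulay d 0 = 0 := by cases d <;> rfl

lemma choose_lt_add (d n : ℕ) (hd : 0 < d) (hn : d ≤ n) : n < Nat.choose n d + d := by
  induction n with
  | zero => omega
  | succ m ih =>
    rcases Nat.lt_or_ge d (m+1) with h | h
    · have h1 := ih (by omega)
      obtain ⟨e, rfl⟩ : ∃ e, d = e + 1 := ⟨d - 1, by omega⟩
      have h2 : (m + 1).choose (e + 1) = m.choose e + m.choose (e + 1) :=
        Nat.choose_succ_succ' m e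
      have h3 : 0 < m.choose e := Nat.choose_pos (by omega)
      omega
    · have : d = m + 1 := by omega
      subst this
      simp [Nat.choose_self]

lemma macaulay_eq (d n m : ℕ) (hd : 0 < d) (hm : 0 < m) (hn : d ≤ n)
    (h1 : Nat.choose n d ≤ m) (h2 : m < Nat.choose (n+1) d) :
    macaulay d m = Nat.choose (n+1) (d+1) + macaulay (d-1) (m - Nat.choose n d) := by
  obtain ⟨d', rfl⟩ : ∃ d', d = d'+1 := ⟨d-1, by omega⟩
  obtain ⟨m', rfl⟩ : ∃ m', m = m'+1 := ⟨m-1, by omega⟩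
  have hk : Nat.findGreatest (fun k => Nat.choose k (d'+1) ≤ m'+1) (m' + d' + 2) = n := by
    rw [Nat.findGreatest_eq_iff]
    refine ⟨?_, fun _ => h1, fun k hk1 hk2 => ?_⟩
    · have := choose_lt_add (d'+1) n hd hn
      omega
    · simp only [not_le]
      have := Nat.choose_le_choose (d'+1) hk1
      rw [Nat.succ_eq_add_one] at this
      omega
  simp only [macaulay, hk]
  rfl

lemma macaulay_choose (d n : ℕ) (hd : 0 < d) (hn : d ≤ n) :
    macaulay d (Nat.choose n d) = Nat.choose (n+1) (d+1) := by
  have hlt : Nat.choose n d < Nat.choose (n+1) d := by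
    obtain ⟨e, rfl⟩ : ∃ e, d = e + 1 := ⟨d - 1, by omega⟩
    have h2 : (n + 1).choose (e + 1) = n.choose e + n.choose (e + 1) :=
      Nat.choose_succ_succ' n e
    have h3 : 0 < n.choose e := Nat.choose_pos (by omega)
    omega
  rw [macaulay_eq d n _ hd (Nat.choose_pos hn) hn le_rfl hlt]
  simp [macaulay_zero]

lemma macaulay_one (d : ℕ) (hd : 0 < d) : macaulay d 1 = 1 := by
  have h2 : (1:ℕ) < Nat.choose (d+1) d := by
    rw [Nat.choose_succ_self_right]; omega
  rw [macaulay_eq d d 1 hd one_pos le_rfl (by simp) h2]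
  simp [macaulay_zero, Nat.choose_self]

lemma macaulay_eq' (d n m : ℕ) (hd : 2 ≤ d) (hm : 0 < m) (hn : d ≤ n)
    (h1 : Nat.choose n d ≤ m) (h2 : m ≤ Nat.choose (n+1) d) :
    macaulay d m = Nat.choose (n+1) (d+1) + macaulay (d-1) (m - Nat.choose n d) := by
  rcases lt_or_eq_of_le h2 with h2 | h2
  · exact macaulay_eq d n m (by omega) hm hn h1 h2
  · subst h2
    obtain ⟨e, rfl⟩ : ∃ e, d = e + 1 := ⟨d - 1, by omega⟩
    have hp : (n + 1).choose (e + 1) = n.choose e + n.choose (e + 1) :=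
      Nat.choose_succ_succ' n e
    rw [macaulay_choose (e+1) (n+1) (by omega) (by omega)]
    have : (n + 1).choose (e + 1) - n.choose (e + 1) = n.choose e := by omega
    rw [this]
    simp only [Nat.add_sub_cancel]
    rw [macaulay_choose e n (by omega) (by omega)]
    have hp2 : (n + 2).choose (e + 2) = (n+1).choose (e+1) + (n+1).choose (e + 2) :=
      Nat.choose_succ_succ' (n+1) (e+1)
    simp only [show e+1+1 = e+2 from rfl, show n+1+1 = n+2 from rfl] at *
    omega

/-- Case 1 of the key construction: let `d > 1`, `a ≥ b > 0`, written as
`a = C(s - 1 + d, d) + A` with `s > 0`, `0 ≤ A < C(s - 1 + d, d - 1)`, and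
`b = C(t - 1 + d, d) + B` with `t ≥ 0`, `0 < B ≤ C(t - 1 + d, d - 1)`.
If `A + B < C(s - 1 + d, d - 1)` and `(A + B)^{⟨d-1⟩} ≥ A^{⟨d-1⟩} + B^{⟨d-1⟩}`, then for
`a₁ = C(s - 1 + d, d) + A + B` and `b₁ = C(t - 1 + d, d)` we have
`0 ≤ b₁ < b ≤ a < a₁ ≤ C(s + d, d)`, `a + b = a₁ + b₁`, and
`a^{⟨d⟩} + b^{⟨d⟩} ≤ a₁^{⟨d⟩} + b₁^{⟨d⟩}`.
(Since `t` may be `0`, the quantity `t - 1 + d` is rendered as `t + d - 1` in `ℕ`.) -/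
theorem macaulay_case_one (d s t a b A B : ℕ) (hd : 1 < d) (hb : 0 < b) (hba : b ≤ a)
    (hs : 0 < s)
    (haeq : a = Nat.choose (s - 1 + d) d + A) (hA : A < Nat.choose (s - 1 + d) (d - 1))
    (hbeq : b = Nat.choose (t + d - 1) d + B)
    (hBpos : 0 < B) (hB : B ≤ Nat.choose (t + d - 1) (d - 1))
    (hAB : A + B < Nat.choose (s - 1 + d) (d - 1))
    (hind : macaulay (d - 1) A + macaulay (d - 1) B ≤ macaulay (d - 1) (A + B)) :
    Nat.choose (t + d - 1) d < b ∧ a < Nat.choose (s - 1 + d) d + A + B ∧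
    Nat.choose (s - 1 + d) d + A + B ≤ Nat.choose (s + d) d ∧
    a + b = (Nat.choose (s - 1 + d) d + A + B) + Nat.choose (t + d - 1) d ∧
    macaulay d a + macaulay d b ≤
      macaulay d (Nat.choose (s - 1 + d) d + A + B) + macaulay d (Nat.choose (t + d - 1) d) := by
  obtain ⟨e, rfl⟩ : ∃ e, d = e + 2 := ⟨d - 2, by omega⟩
  obtain ⟨u, rfl⟩ : ∃ u, s = u + 1 := ⟨s - 1, by omega⟩
  subst haeq
  subst hbeq
  simp only [show u + 1 - 1 + (e + 2) = u + e + 2 from by omega,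
    show e + 2 - 1 = e + 1 from by omega,
    show u + 1 + (e + 2) = u + e + 3 from by omega] at *
  have pasc := Nat.choose_succ_succ' (u + e + 2) (e + 1)
  simp only [show u + e + 2 + 1 = u + e + 3 from by omega,
    show e + 1 + 1 = e + 2 from by omega] at pasc
  have pasc0 : Nat.choose (u + e + 2 + 1) (e + 2) = Nat.choose (u + e + 3) (e + 2) := by
    rw [show u + e + 2 + 1 = u + e + 3 from by omega]
  have hCpos : 0 < Nat.choose (u + e + 2) (e + 2) := Nat.choose_pos (by omega)
  have hassoc : Nat.choose (u + e + 2) (e + 2) + A + B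
      = Nat.choose (u + e + 2) (e + 2) + (A + B) := by omega
  have hma : macaulay (e + 2) (Nat.choose (u + e + 2) (e + 2) + A)
      = Nat.choose (u + e + 3) (e + 3) + macaulay (e + 1) A := by
    have h := macaulay_eq (e + 2) (u + e + 2) (Nat.choose (u + e + 2) (e + 2) + A)
      (by omega) (by omega) (by omega) (by omega) (by omega)
    simp only [Nat.add_sub_cancel_left, show u + e + 2 + 1 = u + e + 3 from by omega,
      show e + 2 + 1 = e + 3 from by omega, show e + 2 - 1 = e + 1 from by omega] at h
    exact h
  have hma1 : macaulay (e + 2) (Nat.choose (u + e + 2) (e + 2) + A + B)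
      = Nat.choose (u + e + 3) (e + 3) + macaulay (e + 1) (A + B) := by
    rw [hassoc]
    have h := macaulay_eq (e + 2) (u + e + 2) (Nat.choose (u + e + 2) (e + 2) + (A + B))
      (by omega) (by omega) (by omega) (by omega) (by omega)
    simp only [Nat.add_sub_cancel_left, show u + e + 2 + 1 = u + e + 3 from by omega,
      show e + 2 + 1 = e + 3 from by omega, show e + 2 - 1 = e + 1 from by omega] at h
    exact h
  rcases t with _ | v
  · -- t = 0
    simp only [show 0 + (e + 2) - 1 = e + 1 from by omega] at *
    have hz : Nat.choose (e + 1) (e + 2) = 0 := Nat.choose_eq_zero_of_lt (by omega)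
    have hone : Nat.choose (e + 1) (e + 1) = 1 := Nat.choose_self _
    have hB1 : B = 1 := by omega
    subst hB1
    have hmb : macaulay (e + 2) (Nat.choose (e + 1) (e + 2) + 1) = 1 := by
      rw [hz]; exact macaulay_one (e + 2) (by omega)
    have hmb1 : macaulay (e + 2) (Nat.choose (e + 1) (e + 2)) = 0 := by
      rw [hz]; exact macaulay_zero _
    have hM1 : macaulay (e + 1) 1 = 1 := macaulay_one (e + 1) (by omega)
    refine ⟨by omega, by omega, by omega, by omega, ?_⟩
    rw [hma, hma1, hmb, hmb1]
    omega
  · -- t = v + 1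
    simp only [show v + 1 + (e + 2) - 1 = v + e + 2 from by omega] at *
    have pasct := Nat.choose_succ_succ' (v + e + 2) (e + 1)
    simp only [show v + e + 2 + 1 = v + e + 3 from by omega,
      show e + 1 + 1 = e + 2 from by omega] at pasct
    have pasct0 : Nat.choose (v + e + 2 + 1) (e + 2) = Nat.choose (v + e + 3) (e + 2) := by
      rw [show v + e + 2 + 1 = v + e + 3 from by omega]
    have hmb : macaulay (e + 2) (Nat.choose (v + e + 2) (e + 2) + B)
        = Nat.choose (v + e + 3) (e + 3) + macaulay (e + 1) B := by
      have h := macaulay_eq' (e + 2) (v + e + 2) (Nat.choose (v + e + 2) (e + 2) + B)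
        (by omega) (by omega) (by omega) (by omega) (by omega)
      simp only [Nat.add_sub_cancel_left, show v + e + 2 + 1 = v + e + 3 from by omega,
        show e + 2 + 1 = e + 3 from by omega, show e + 2 - 1 = e + 1 from by omega] at h
      exact h
    have hmb1 : macaulay (e + 2) (Nat.choose (v + e + 2) (e + 2))
        = Nat.choose (v + e + 3) (e + 3) := by
      have h := macaulay_choose (e + 2) (v + e + 2) (by omega) (by omega)
      simp only [show v + e + 2 + 1 = v + e + 3 from by omega,
        show e + 2 + 1 = e + 3 from by omega] at h
      exact h
    refine ⟨by omega, by omega, by omega, by omega, ?_⟩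
    rw [hma, hma1, hmb, hmb1]
    omega
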